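/- Let I be a monomial ideal in the polynomial ring R = K[x_1,...,x_n] all of whose minimal generators have the same degree. Suppose I satisfies the exchange property: for all u, v in G(I) and all i with ν_i(u) > ν_i(v), there exists j with ν_j(v) > ν_j(u) such that x_j·(u/x_i) ∈ G(I). Then I has linear quotients with respect to the reverse lexicographic order of the generators, i.e., for each u ∈ G(I), if J is the ideal generated by all v ∈ G(I) with v > u in reverse lexicographic order, then J : u is generated by variables. -/

import Mathlib

/-! Statement 0: A monomial ideal generated in a single degree satisfying the
exchange property has linear quotients with respect to the reverse
lexicographic order of the generators. -/

/-- A monomial in `n` variables, recorded by its exponent vector. -/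
abbrev Mon (n : ℕ) := Fin n → ℕ

/-- total degree of a monomial -/
def mdeg {n : ℕ} (a : Mon n) : ℕ := ∑ i, a i

/-- `RevLexGT a b` : `a` is strictly greater than `b` in the reverse
lexicographic order (the greater monomial is the one which is *smaller* at the
last index where they differ). -/
def RevLexGT {n : ℕ} (a b : Mon n) : Prop :=
  ∃ i, a i < b i ∧ ∀ j, i < j → a j = b j

/-- The monomial `x^a` in `K[x_1,…,x_n]`. -/
noncomputable def toMon (K : Type*) [CommSemiring K] {n : ℕ} (a : Mon n) :
    MvPolynomial (Fin n) K :=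
  MvPolynomial.monomial (Finsupp.equivFunOnFinite.symm a) 1

lemma key_exchange {n : ℕ} {G : Finset (Mon n)}
    (hexch : ∀ u ∈ G, ∀ v ∈ G, ∀ i : Fin n, v i < u i →
      ∃ j : Fin n, u j < v j ∧ (u - Pi.single i 1 + Pi.single j 1) ∈ G)
    {u : Mon n} (hu : u ∈ G) (w : Mon n) {v : Mon n} (hv : v ∈ G)
    (hgt : RevLexGT v u) (hle : ∀ k, v k ≤ w k + u k) :
    ∃ j, 0 < w j ∧ ∃ v' ∈ G, RevLexGT v' u ∧ ∀ k, v' k ≤ u k + (Pi.single j 1 : Mon n) k := by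
  obtain ⟨i, hi, htail⟩ := hgt
  obtain ⟨j, hj, hmem⟩ := hexch u hu v hv i hi
  have hji : j < i := by
    rcases lt_trichotomy j i with h | h | h
    · exact h
    · subst h; omega
    · have := htail j h; omega
  have hne : j ≠ i := hji.ne
  refine ⟨j, by have := hle j; omega, u - Pi.single i 1 + Pi.single j 1, hmem, ?_, ?_⟩
  · refine ⟨i, ?_, fun k hk => ?_⟩
    · have h1 : (u - Pi.single i 1 + Pi.single j 1 : Mon n) i
          = u i - (Pi.single i 1 : Mon n) i + (Pi.single j 1 : Mon n) i := rfl
      rw [h1, Pi.single_eq_same, Pi.single_eq_of_ne hne.symm]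
      omega
    · have h1 : (u - Pi.single i 1 + Pi.single j 1 : Mon n) k
          = u k - (Pi.single i 1 : Mon n) k + (Pi.single j 1 : Mon n) k := rfl
      rw [h1, Pi.single_eq_of_ne hk.ne', Pi.single_eq_of_ne (by omega : k ≠ j)]; omega
  · intro k
    have h1 : (u - Pi.single i 1 + Pi.single j 1 : Mon n) k
        = u k - (Pi.single i 1 : Mon n) k + (Pi.single j 1 : Mon n) k := rfl
    rw [h1]; omega

theorem stmt0 {K : Type*} [Field K] {n : ℕ} (G : Finset (Mon n))
    -- all minimal generators have the same degree
    (hdeg : ∀ a ∈ G, ∀ b ∈ G, mdeg a = mdeg b)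
    -- `G` is a minimal system of monomial generators
    (hmin : ∀ a ∈ G, ∀ b ∈ G, a ≤ b → a = b)
    -- the exchange property
    (hexch : ∀ u ∈ G, ∀ v ∈ G, ∀ i : Fin n, v i < u i →
      ∃ j : Fin n, u j < v j ∧ (u - Pi.single i 1 + Pi.single j 1) ∈ G) :
    -- linear quotients for the reverse lexicographic order: for each
    -- generator `u`, the colon ideal `J : u` (with `J` generated by the
    -- generators which are greater than `u`) is generated by variables
    ∀ u ∈ G, ∃ S : Set (Fin n),
      (Ideal.span {p : MvPolynomial (Fin n) K | ∃ v ∈ G, RevLexGT v u ∧ p = toMon K v}).colon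
          (Ideal.span {toMon K u}) =
        Ideal.span ((fun i => (MvPolynomial.X i : MvPolynomial (Fin n) K)) '' S) := by
  intro u hu
  set d : Fin n →₀ ℕ := Finsupp.equivFunOnFinite.symm u with hd
  set S : Set (Fin n) :=
    {j | ∃ v ∈ G, RevLexGT v u ∧ ∀ k, v k ≤ u k + (Pi.single j 1 : Mon n) k} with hS
  set T : Set (Fin n →₀ ℕ) :=
    Finsupp.equivFunOnFinite.symm '' {v | v ∈ G ∧ RevLexGT v u} with hT
  have hJset : {p : MvPolynomial (Fin n) K | ∃ v ∈ G, RevLexGT v u ∧ p = toMon K v}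
      = (fun s => MvPolynomial.monomial s (1 : K)) '' T := by
    ext p
    simp only [hT, Set.mem_image, Set.mem_setOf_eq, exists_exists_and_eq_and]
    constructor
    · rintro ⟨v, hv, hgt, rfl⟩; exact ⟨v, ⟨hv, hgt⟩, rfl⟩
    · rintro ⟨v, ⟨hv, hgt⟩, rfl⟩; exact ⟨v, hv, hgt, rfl⟩
  have hsupp : ∀ f : MvPolynomial (Fin n) K,
      (f * toMon K u).support = f.support.map (addRightEmbedding d) := by
    intro f
    have : toMon K u = AddMonoidAlgebra.single d (1 : K) := by
      rw [toMon, MvPolynomial.single_eq_monomial]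
    rw [this]
    exact AddMonoidAlgebra.support_coeff_mul_single f 1 (by simp) d
  have hdapp : ∀ k, d k = u k := fun k => rfl
  refine ⟨S, ?_⟩
  ext f
  rw [Ideal.mem_colon_span_singleton, hJset, MvPolynomial.mem_ideal_span_monomial_image,
    MvPolynomial.mem_ideal_span_X_image, hsupp]
  constructor
  · intro h m hm
    obtain ⟨s, hsT, hsle⟩ := h (m + d)
      (Finset.mem_map.2 ⟨m, hm, rfl⟩)
    obtain ⟨v, ⟨hv, hgt⟩, rfl⟩ := hsT
    have hle : ∀ k, v k ≤ (⇑m : Mon n) k + u k := by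
      intro k
      have := Finsupp.le_def.1 hsle k
      simpa [Finsupp.add_apply, hdapp] using this
    obtain ⟨j, hj, v', hv', hgt', hvle⟩ := key_exchange hexch hu (⇑m) hv hgt hle
    exact ⟨j, ⟨v', hv', hgt', hvle⟩, by omega⟩
  · intro h m hm
    rw [Finset.mem_map] at hm
    obtain ⟨m', hm', rfl⟩ := hm
    obtain ⟨i, hiS, hi0⟩ := h m' hm'
    obtain ⟨v, hv, hgt, hvle⟩ := hiS
    refine ⟨Finsupp.equivFunOnFinite.symm v, ⟨v, ⟨hv, hgt⟩, rfl⟩, ?_⟩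
    rw [Finsupp.le_def]
    intro k
    have h1 : (Finsupp.equivFunOnFinite.symm v) k = v k := rfl
    have h2 : (addRightEmbedding d m') k = m' k + u k := rfl
    rw [h1, h2]
    have := hvle k
    by_cases hk : k = i
    · subst hk; rw [Pi.single_eq_same] at this; omega
    · rw [Pi.single_eq_of_ne hk] at this; omega
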